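/- Fix ξ, α ∈ ℝ and ε ∈ {+1, −1}, and on U = {(x¹,x²) ∈ ℝ² : x¹ > 0} consider the Type ℬ connection whose only nonzero Christoffel symbols are Γ_{11}{}^1 = ξ/x¹, Γ_{12}{}^1 = 2α/x¹, Γ_{12}{}^2 = −1/x¹, Γ_{22}{}^1 = ε/x¹. Then: (a) the Ricci tensor is ρ_{22} = εξ/(x¹)² and ρ_{11} = ρ_{12} = ρ_{21} = 0; (b) the Ricci tensor is parallel: ρ_{jk;i} = 0 on U for all i,j,k; (c) the torsion components are T¹ = α/x¹, T² = −1/(2x¹); (d) the covariant derivative of the torsion satisfies T¹{}_{;1} = −α/(x¹)², T²{}_{;1} = (ξ+1)/(2(x¹)²), T¹{}_{;2} = −ε/(2(x¹)²), T²{}_{;2} = 0; in particular the torsion is not parallel. -/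

import Mathlib

noncomputable section

open scoped BigOperators

/-- The standard coordinate directions in `ℝ × ℝ`. -/
def coordVec : Fin 2 → ℝ × ℝ := ![(1, 0), (0, 1)]

/-- Partial derivative `∂_i f` of `f : ℝ × ℝ → ℝ`. -/
noncomputable def pder (i : Fin 2) (f : ℝ × ℝ → ℝ) (p : ℝ × ℝ) : ℝ :=
  fderiv ℝ f p (coordVec i)

/-- Curvature tensor `R_{ijk}{}^l` of the connection with Christoffel symbols `Γ`. -/
noncomputable def affCurv (Γ : Fin 2 → Fin 2 → Fin 2 → ℝ × ℝ → ℝ)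
    (i j k l : Fin 2) (p : ℝ × ℝ) : ℝ :=
  pder i (Γ j k l) p - pder j (Γ i k l) p +
    ∑ m : Fin 2, (Γ i m l p * Γ j k m p - Γ j m l p * Γ i k m p)

/-- Ricci tensor `ρ_{jk} = R_{1jk}{}^1 + R_{2jk}{}^2`. -/
noncomputable def affRicci (Γ : Fin 2 → Fin 2 → Fin 2 → ℝ × ℝ → ℝ)
    (j k : Fin 2) (p : ℝ × ℝ) : ℝ :=
  affCurv Γ 0 j k 0 p + affCurv Γ 1 j k 1 p

/-- Covariant derivative of the Ricci tensor,
`ρ_{jk;i} = ∂_i ρ_{jk} − Σ_m (Γ_{ij}{}^m ρ_{mk} + Γ_{ik}{}^m ρ_{jm})`. -/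
noncomputable def affRicciCov (Γ : Fin 2 → Fin 2 → Fin 2 → ℝ × ℝ → ℝ)
    (i j k : Fin 2) (p : ℝ × ℝ) : ℝ :=
  pder i (affRicci Γ j k) p -
    ∑ m : Fin 2, (Γ i j m p * affRicci Γ m k p + Γ i k m p * affRicci Γ j m p)

/-- Torsion components `T^k = (1/2)(Γ_{12}{}^k − Γ_{21}{}^k)`. -/
noncomputable def affTor (Γ : Fin 2 → Fin 2 → Fin 2 → ℝ × ℝ → ℝ)
    (k : Fin 2) (p : ℝ × ℝ) : ℝ :=
  (1 / 2) * (Γ 0 1 k p - Γ 1 0 k p)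

/-- Covariant derivative of the torsion tensor,
`T^k{}_{;i} = ∂_i T^k + Σ_m Γ_{im}{}^k T^m − (Γ_{i1}{}^1 + Γ_{i2}{}^2) T^k`. -/
noncomputable def affTorCov (Γ : Fin 2 → Fin 2 → Fin 2 → ℝ × ℝ → ℝ)
    (i k : Fin 2) (p : ℝ × ℝ) : ℝ :=
  pder i (affTor Γ k) p + (∑ m : Fin 2, Γ i m k p * affTor Γ m p)
    - (Γ i 0 0 p + Γ i 1 1 p) * affTor Γ k p

/-- The Type ℬ connection on `{x¹ > 0}` with only nonzero Christoffel symbols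
`Γ_{11}{}^1 = ξ/x¹`, `Γ_{12}{}^1 = 2α/x¹`, `Γ_{12}{}^2 = −1/x¹`, `Γ_{22}{}^1 = ε/x¹`. -/
noncomputable def GammaB7 (ξ α ε : ℝ) : Fin 2 → Fin 2 → Fin 2 → ℝ × ℝ → ℝ :=
  fun i j k p =>
    if i = 0 ∧ j = 0 ∧ k = 0 then ξ / p.1
    else if i = 0 ∧ j = 1 ∧ k = 0 then 2 * α / p.1
    else if i = 0 ∧ j = 1 ∧ k = 1 then -1 / p.1
    else if i = 1 ∧ j = 1 ∧ k = 0 then ε / p.1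
    else 0


section Aux

lemma hasFDeriv_div1 (c : ℝ) (p : ℝ × ℝ) (hp : p.1 ≠ 0) :
    HasFDerivAt (fun q : ℝ × ℝ => c / q.1)
      ((-c / p.1 ^ 2) • (ContinuousLinearMap.fst ℝ ℝ ℝ)) p := by
  have hg : HasDerivAt (fun x : ℝ => c / x) (c * (-(p.1 ^ 2)⁻¹)) p.1 := by
    simpa [div_eq_mul_inv] using (hasDerivAt_inv hp).const_mul c
  have h := HasDerivAt.comp_hasFDerivAt (𝕜 := ℝ) p hg (hasFDerivAt_fst (p := p))
  rw [show c * (-(p.1 ^ 2)⁻¹) = -c / p.1 ^ 2 by field_simp] at h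
  exact h

lemma pder0_div1 (c : ℝ) (p : ℝ × ℝ) (hp : p.1 ≠ 0) :
    pder 0 (fun q => c / q.1) p = -c / p.1 ^ 2 := by
  unfold pder; rw [(hasFDeriv_div1 c p hp).fderiv]; simp [coordVec]

lemma pder1_div1 (c : ℝ) (p : ℝ × ℝ) (hp : p.1 ≠ 0) :
    pder 1 (fun q => c / q.1) p = 0 := by
  unfold pder; rw [(hasFDeriv_div1 c p hp).fderiv]; simp [coordVec]

lemma hasFDeriv_div2 (c : ℝ) (p : ℝ × ℝ) (hp : p.1 ≠ 0) :
    HasFDerivAt (fun q : ℝ × ℝ => c / q.1 ^ 2)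
      ((-2 * c / p.1 ^ 3) • (ContinuousLinearMap.fst ℝ ℝ ℝ)) p := by
  have hg : HasDerivAt (fun x : ℝ => c / x ^ 2) (c * (-(2 * p.1) / (p.1 ^ 2) ^ 2)) p.1 := by
    have h0 : HasDerivAt (fun x : ℝ => x ^ 2) (2 * p.1) p.1 := by
      simpa using hasDerivAt_pow 2 p.1
    simpa [div_eq_mul_inv] using (h0.inv (pow_ne_zero 2 hp)).const_mul c
  have h := HasDerivAt.comp_hasFDerivAt (𝕜 := ℝ) p hg (hasFDerivAt_fst (p := p))
  rw [show c * (-(2 * p.1) / (p.1 ^ 2) ^ 2) = -2 * c / p.1 ^ 3 by field_simp] at h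
  exact h

lemma pder0_div2 (c : ℝ) (p : ℝ × ℝ) (hp : p.1 ≠ 0) :
    pder 0 (fun q => c / q.1 ^ 2) p = -2 * c / p.1 ^ 3 := by
  unfold pder; rw [(hasFDeriv_div2 c p hp).fderiv]; simp [coordVec]

lemma pder1_div2 (c : ℝ) (p : ℝ × ℝ) (hp : p.1 ≠ 0) :
    pder 1 (fun q => c / q.1 ^ 2) p = 0 := by
  unfold pder; rw [(hasFDeriv_div2 c p hp).fderiv]; simp [coordVec]

lemma pder_congr (i : Fin 2) (f g : ℝ × ℝ → ℝ) (p : ℝ × ℝ)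
    (h : ∀ q : ℝ × ℝ, 0 < q.1 → f q = g q) (hp : 0 < p.1) :
    pder i f p = pder i g p := by
  unfold pder
  have hopen : IsOpen {q : ℝ × ℝ | 0 < q.1} := isOpen_lt continuous_const continuous_fst
  have heq : f =ᶠ[nhds p] g :=
    Filter.eventuallyEq_of_mem (hopen.mem_nhds hp) (fun q hq => h q hq)
  rw [heq.fderiv_eq]

variable (ξ α ε : ℝ)

lemma G000 : GammaB7 ξ α ε 0 0 0 = fun p => ξ / p.1 := by funext p; simp [GammaB7]
lemma G001 : GammaB7 ξ α ε 0 0 1 = fun p => (0:ℝ) / p.1 := by funext p; simp [GammaB7]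
lemma G010 : GammaB7 ξ α ε 0 1 0 = fun p => (2*α) / p.1 := by funext p; simp [GammaB7]
lemma G011 : GammaB7 ξ α ε 0 1 1 = fun p => (-1) / p.1 := by funext p; simp [GammaB7]
lemma G100 : GammaB7 ξ α ε 1 0 0 = fun p => (0:ℝ) / p.1 := by funext p; simp [GammaB7]
lemma G101 : GammaB7 ξ α ε 1 0 1 = fun p => (0:ℝ) / p.1 := by funext p; simp [GammaB7]
lemma G110 : GammaB7 ξ α ε 1 1 0 = fun p => ε / p.1 := by funext p; simp [GammaB7]
lemma G111 : GammaB7 ξ α ε 1 1 1 = fun p => (0:ℝ) / p.1 := by funext p; simp [GammaB7]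

/-- The coefficient of the Ricci tensor. -/
def RB7 (ξ ε : ℝ) (j k : Fin 2) : ℝ := if j = 1 ∧ k = 1 then ε * ξ else 0

lemma fin2_cases (j : Fin 2) : j = 0 ∨ j = 1 := by omega

lemma ricci_val (j k : Fin 2) (p : ℝ × ℝ) (hp : 0 < p.1) :
    affRicci (GammaB7 ξ α ε) j k p = RB7 ξ ε j k / p.1 ^ 2 := by
  rcases fin2_cases j with hj | hj <;> rcases fin2_cases k with hk | hk <;> subst hj <;> subst hk <;>
  · unfold affRicci affCurv
    simp only [Fin.sum_univ_two, G000, G001, G010, G011, G100, G101, G110, G111,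
      pder0_div1 _ p hp.ne', pder1_div1 _ p hp.ne']
    simp only [RB7]
    norm_num
    try field_simp
    try ring

lemma riccicov_val (i j k : Fin 2) (p : ℝ × ℝ) (hp : 0 < p.1) :
    affRicciCov (GammaB7 ξ α ε) i j k p = 0 := by
  unfold affRicciCov
  rw [pder_congr i _ (fun q => RB7 ξ ε j k / q.1 ^ 2) p
      (fun q hq => ricci_val ξ α ε j k q hq) hp]
  have r00 := ricci_val ξ α ε 0 0 p hp
  have r01 := ricci_val ξ α ε 0 1 p hp
  have r10 := ricci_val ξ α ε 1 0 p hp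
  have r11 := ricci_val ξ α ε 1 1 p hp
  rcases fin2_cases i with hi | hi <;> rcases fin2_cases j with hj | hj <;>
      rcases fin2_cases k with hk | hk <;> subst hi <;> subst hj <;> subst hk <;>
  · simp only [Fin.sum_univ_two, r00, r01, r10, r11,
      G000, G001, G010, G011, G100, G101, G110, G111,
      pder0_div2 _ p hp.ne', pder1_div2 _ p hp.ne']
    simp only [RB7]
    norm_num
    try field_simp
    try ring

lemma tor0 : affTor (GammaB7 ξ α ε) 0 = fun p => α / p.1 := by
  funext p; simp [affTor, GammaB7]; ring

lemma tor1 : affTor (GammaB7 ξ α ε) 1 = fun p => (-1/2) / p.1 := by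
  funext p; simp [affTor, GammaB7]; ring

end Aux

/-- for the Type ℬ structure above (with `ε = ±1`):
(a) `ρ_{22} = εξ/(x¹)²` and all other Ricci components vanish; (b) the Ricci tensor is
parallel; (c) `T¹ = α/x¹`, `T² = −1/(2x¹)`; (d) `T¹{}_{;1} = −α/(x¹)²`,
`T²{}_{;1} = (ξ+1)/(2(x¹)²)`, `T¹{}_{;2} = −ε/(2(x¹)²)`, `T²{}_{;2} = 0`;
in particular the torsion is not parallel. -/
theorem typeB7_symmetric_nonparallel_torsion (ξ α ε : ℝ) (hε : ε = 1 ∨ ε = -1) :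
    (∀ p ∈ {q : ℝ × ℝ | 0 < q.1},
        affRicci (GammaB7 ξ α ε) 1 1 p = ε * ξ / p.1 ^ 2 ∧
        affRicci (GammaB7 ξ α ε) 0 0 p = 0 ∧
        affRicci (GammaB7 ξ α ε) 0 1 p = 0 ∧
        affRicci (GammaB7 ξ α ε) 1 0 p = 0) ∧
    (∀ i j k, ∀ p ∈ {q : ℝ × ℝ | 0 < q.1}, affRicciCov (GammaB7 ξ α ε) i j k p = 0) ∧
    (∀ p ∈ {q : ℝ × ℝ | 0 < q.1},
        affTor (GammaB7 ξ α ε) 0 p = α / p.1 ∧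
        affTor (GammaB7 ξ α ε) 1 p = -1 / (2 * p.1)) ∧
    (∀ p ∈ {q : ℝ × ℝ | 0 < q.1},
        affTorCov (GammaB7 ξ α ε) 0 0 p = -α / p.1 ^ 2 ∧
        affTorCov (GammaB7 ξ α ε) 0 1 p = (ξ + 1) / (2 * p.1 ^ 2) ∧
        affTorCov (GammaB7 ξ α ε) 1 0 p = -ε / (2 * p.1 ^ 2) ∧
        affTorCov (GammaB7 ξ α ε) 1 1 p = 0) ∧
    (∃ i k, ∃ p ∈ {q : ℝ × ℝ | 0 < q.1}, affTorCov (GammaB7 ξ α ε) i k p ≠ 0) := by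
  have hopen : ∀ q : ℝ × ℝ, q ∈ {q : ℝ × ℝ | 0 < q.1} → 0 < q.1 := fun q hq => hq
  refine ⟨?_, ?_, ?_, ?_, ?_⟩
  · intro p hp
    have hp' : 0 < p.1 := hp
    refine ⟨?_, ?_, ?_, ?_⟩ <;>
    · rw [ricci_val ξ α ε _ _ p hp']
      simp [RB7]
  · intro i j k p hp
    exact riccicov_val ξ α ε i j k p hp
  · intro p hp
    have hp' : 0 < p.1 := hp
    constructor
    · rw [tor0]
    · rw [tor1]; exact div_div (-1) 2 p.1
  · intro p hp
    have hp' : 0 < p.1 := hp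
    refine ⟨?_, ?_, ?_, ?_⟩ <;>
    · unfold affTorCov
      simp only [Fin.sum_univ_two, tor0, tor1,
        G000, G001, G010, G011, G100, G101, G110, G111,
        pder0_div1 _ p hp'.ne', pder1_div1 _ p hp'.ne']
      try norm_num
      try field_simp
      try ring
      try tauto
  · refine ⟨1, 0, (1, 0), by norm_num, ?_⟩
    have h : affTorCov (GammaB7 ξ α ε) 1 0 (1, 0) = -ε / (2 * (1:ℝ) ^ 2) := by
      unfold affTorCov
      simp only [Fin.sum_univ_two, tor0, tor1,
        G000, G001, G010, G011, G100, G101, G110, G111,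
        pder0_div1 _ ((1:ℝ), (0:ℝ)) (by norm_num), pder1_div1 _ ((1:ℝ), (0:ℝ)) (by norm_num)]
      norm_num
      ring
    rw [h]
    rcases hε with h1 | h1 <;> rw [h1] <;> norm_num
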